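/- Let s ∈ ℝⁿ be sorted non-increasingly, let σ_ℓ := (1/ℓ)∑_{j=1}^ℓ s_j and γ_ℓ := σ_ℓ + ℓ/2. Fix i ≥ 2 and suppose s_i ≤ s_{i+1} + 1 and s_{i+1} < σ_i − (i+1)/2. Then s_i < σ_{i−1} − i/2, and hence γ_{i−1} > γ_i. -/

import Mathlib

/-- For a non-increasing vector `s` (1-indexed), with
`σ ℓ := (1/ℓ)∑_{j=1}^ℓ s j` and `γ ℓ := σ ℓ + ℓ/2`, if `i ≥ 2`,
`s i ≤ s (i+1) + 1` and `s (i+1) < σ i − (i+1)/2`, then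
`s i < σ (i−1) − i/2`, and hence `γ (i−1) > γ i`. -/
theorem stmt3 (n : ℕ) (s : ℕ → ℝ)
    (hsort : ∀ a b, 1 ≤ a → a ≤ b → b ≤ n → s b ≤ s a)
    (σ γ : ℕ → ℝ)
    (hσ : ∀ ℓ, σ ℓ = (∑ j ∈ Finset.Icc 1 ℓ, s j) / (ℓ : ℝ))
    (hγ : ∀ ℓ, γ ℓ = σ ℓ + (ℓ : ℝ) / 2)
    (i : ℕ) (hi : 2 ≤ i) (hin : i + 1 ≤ n)
    (hgap : s i ≤ s (i + 1) + 1)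
    (hcond : s (i + 1) < σ i - ((i : ℝ) + 1) / 2) :
    s i < σ (i - 1) - (i : ℝ) / 2 ∧ γ (i - 1) > γ i := by
  obtain ⟨k, rfl⟩ : ∃ k, i = k + 1 := ⟨i - 1, by omega⟩
  have hk1 : 1 ≤ k := by omega
  have hkR : (1 : ℝ) ≤ (k : ℝ) := by exact_mod_cast hk1
  have hkpos : (0 : ℝ) < (k : ℝ) := by linarith
  have hk1pos : (0 : ℝ) < (k : ℝ) + 1 := by linarith
  have hsplit : ∑ j ∈ Finset.Icc 1 (k + 1), s j = (∑ j ∈ Finset.Icc 1 k, s j) + s (k + 1) :=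
    Finset.sum_Icc_succ_top (by omega) s
  set A := ∑ j ∈ Finset.Icc 1 k, s j with hA
  have hσk : σ k = A / k := hσ k
  have hσk1 : σ (k + 1) = (A + s (k + 1)) / ((k : ℝ) + 1) := by
    rw [hσ (k + 1), hsplit]; push_cast; ring_nf
  simp only [Nat.add_sub_cancel]
  rw [hσk1] at hcond
  -- from hcond: A + s(k+1) > (k+1)*(s(k+2) + (k+2)/2)
  have hA1 : ((s (k + 1 + 1)) + ((k : ℝ) + 2) / 2) * ((k : ℝ) + 1) < A + s (k + 1) := by
    rw [← lt_div_iff₀ hk1pos]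
    push_cast at hcond
    linarith
  have hA2 : (k : ℝ) * s (k + 1) + ((k : ℝ) + 1) * (k : ℝ) / 2 < A := by
    nlinarith [hA1, hgap, hk1pos]
  have key : s (k + 1) < A / k - ((k : ℝ) + 1) / 2 := by
    rw [lt_sub_iff_add_lt, ← sub_lt_iff_lt_add'] at *
    rw [lt_div_iff₀ hkpos]
    nlinarith [hA2]
  rw [hσk]
  constructor
  · push_cast; linarith [key]
  · rw [hγ k, hγ (k + 1), hσk, hσk1]
    have hσdiff : (A + s (k + 1)) / ((k : ℝ) + 1) < A / k - 1 / 2 := by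
      rw [div_lt_iff₀ hk1pos]
      have hs : s (k + 1) < A / k - ((k : ℝ) + 1) / 2 := key
      have hAk : A = (A / k) * k := by field_simp
      nlinarith [hs, hkpos]
    push_cast; linarith [hσdiff]
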